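/- arXiv:2210.06056 — 2 statements merged into one kernel-verified Lean document; each statement's English description precedes it below -/
import Mathlib

section
/- For any integers c_1, …, c_k (k ≥ 1), the matrix product σ_{1,q}^{−c_1}·S_q·σ_{1,q}^{−c_2}·S_q·⋯·σ_{1,q}^{−c_k}·S_q applied to the column vector (1, 1 − q)ᵀ equals the column vector (E^♭_k(c_1,…,c_k)_q, E^♭_{k−1}(c_2,…,c_k)_q)ᵀ. -/
noncomputable section

/-- The field ℚ(q) of rational functions over ℚ. -/
abbrev K : Type := RatFunc ℚ

/-- The variable q. -/
def q : K := RatFunc.X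

/-- Right q-integer `[n]^♯` with deformation parameter `x`. -/
def qsX (x : K) (n : ℤ) : K := (1 - x ^ n) / (1 - x)

/-- Left q-integer `[n]^♭` with deformation parameter `x`. -/
def qfX (x : K) (n : ℤ) : K := (1 - x ^ (n - 1) + x ^ n - x ^ (n + 1)) / (1 - x)

/-- Right q-integer `[n]^♯_q`. -/
def qs (n : ℤ) : K := qsX q n

/-- Left q-integer `[n]^♭_q`. -/
def qf (n : ℤ) : K := qfX q n

/-- Right q-deformed Euler continuant `E^♯` (first-row expansion of the
tridiagonal determinant), with parameter `x`. -/
def EsharpX (x : K) : List ℤ → K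
  | [] => 1
  | [c] => qsX x c
  | c :: d :: rest => qsX x c * EsharpX x (d :: rest) - x ^ (c - 1) * EsharpX x rest

/-- Left q-deformed Euler continuant `E^♭` (first-row expansion of the
tridiagonal determinant whose (k,k) entry is the left q-integer), with parameter `x`. -/
def EflatX (x : K) : List ℤ → K
  | [] => 1
  | [c] => qfX x c
  | c :: d :: rest => qsX x c * EflatX x (d :: rest) - x ^ (c - 1) * EflatX x rest

def Esharp (L : List ℤ) : K := EsharpX q L

def Eflat (L : List ℤ) : K := EflatX q L

/-- `E^♯_{j-1}(d_2,…,d_j)` for the input list `(d_1,…,d_j)`, with the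
convention `E^♯_{-1}() = 0` when the list is empty. -/
def EsharpD : List ℤ → K
  | [] => 0
  | _ :: rest => Esharp rest

/-- `E^♭_{j-1}(d_2,…,d_j)` for the input list `(d_1,…,d_j)`, with the
convention `E^♭_{-1}() = 1 - q` when the list is empty. -/
def EflatD : List ℤ → K
  | [] => 1 - q
  | _ :: rest => Eflat rest

/-- Left q-deformed negative continued fraction `[[c_1,…,c_k]]^♭_q`. -/
def nflat : List ℤ → K
  | [] => 0
  | [c] => qf c
  | c :: d :: rest => qs c - q ^ (c - 1) / nflat (d :: rest)

/-- Right q-deformed negative continued fraction `[[c_1,…,c_k]]^♯_q`. -/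
def nsharp : List ℤ → K
  | [] => 0
  | [c] => qs c
  | c :: d :: rest => qs c - q ^ (c - 1) / nsharp (d :: rest)

/-- Left q-deformed regular continued fraction, with alternating parameter `x`, `x⁻¹`. -/
def regFlatX : K → List ℤ → K
  | _, [] => 0
  | x, [a] => qfX x a
  | x, a :: d :: rest => qsX x a + x ^ a / regFlatX x⁻¹ (d :: rest)

/-- Left q-deformed regular continued fraction `[a_1,…,a_{2m}]^♭_q`. -/
def regFlat (L : List ℤ) : K := regFlatX q L

/-- Classical negative continued fraction `[[c_1,…,c_k]] ∈ ℚ`. -/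
def negCF : List ℤ → ℚ
  | [] => 0
  | [c] => c
  | c :: d :: rest => c - 1 / negCF (d :: rest)

/-- Classical regular continued fraction `[a_1,…,a_{2m}] ∈ ℚ`. -/
def regCF : List ℤ → ℚ
  | [] => 0
  | [a] => a
  | a :: d :: rest => a + 1 / regCF (d :: rest)

/-- The matrix σ_{1,q} as an invertible 2×2 matrix over ℚ(q). -/
def σ1 : (Matrix (Fin 2) (Fin 2) K)ˣ where
  val := !![q⁻¹, -q⁻¹; 0, 1]
  inv := !![q, 1; 0, 1]
  val_inv := by
    have hq : (q : K) ≠ 0 := RatFunc.X_ne_zero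
    ext i j
    fin_cases i <;> fin_cases j <;>
      simp [Matrix.mul_apply, Fin.sum_univ_two, inv_mul_cancel₀ hq]
  inv_val := by
    have hq : (q : K) ≠ 0 := RatFunc.X_ne_zero
    ext i j
    fin_cases i <;> fin_cases j <;>
      simp [Matrix.mul_apply, Fin.sum_univ_two, mul_inv_cancel₀ hq]

/-- The matrix σ_{2,q} as an invertible 2×2 matrix over ℚ(q). -/
def σ2 : (Matrix (Fin 2) (Fin 2) K)ˣ where
  val := !![1, 0; 1, q⁻¹]
  inv := !![1, 0; -q, q]
  val_inv := by
    have hq : (q : K) ≠ 0 := RatFunc.X_ne_zero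
    ext i j
    fin_cases i <;> fin_cases j <;>
      simp [Matrix.mul_apply, Fin.sum_univ_two, inv_mul_cancel₀ hq]
  inv_val := by
    have hq : (q : K) ≠ 0 := RatFunc.X_ne_zero
    ext i j
    fin_cases i <;> fin_cases j <;>
      simp [Matrix.mul_apply, Fin.sum_univ_two, mul_inv_cancel₀ hq]

/-- The matrix S_q as an invertible 2×2 matrix over ℚ(q). -/
def Sq : (Matrix (Fin 2) (Fin 2) K)ˣ where
  val := !![0, -q⁻¹; 1, 0]
  inv := !![0, 1; -q, 0]
  val_inv := by
    have hq : (q : K) ≠ 0 := RatFunc.X_ne_zero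
    ext i j
    fin_cases i <;> fin_cases j <;>
      simp [Matrix.mul_apply, Fin.sum_univ_two, inv_mul_cancel₀ hq]
  inv_val := by
    have hq : (q : K) ≠ 0 := RatFunc.X_ne_zero
    ext i j
    fin_cases i <;> fin_cases j <;>
      simp [Matrix.mul_apply, Fin.sum_univ_two, mul_inv_cancel₀ hq]

/-- The product σ_{1,q}^{-c_1}·S_q·σ_{1,q}^{-c_2}·S_q⋯σ_{1,q}^{-c_k}·S_q. -/
def prodCS : List ℤ → (Matrix (Fin 2) (Fin 2) K)ˣ
  | [] => 1
  | c :: rest => σ1 ^ (-c) * Sq * prodCS rest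

/-- The product σ_{1,q}^{-a_1}·σ_{2,q}^{a_2}⋯σ_{1,q}^{-a_{2m-1}}·σ_{2,q}^{a_{2m}}. -/
def prodReg : List ℤ → (Matrix (Fin 2) (Fin 2) K)ˣ
  | [] => 1
  | [a] => σ1 ^ (-a)
  | a :: b :: rest => σ1 ^ (-a) * σ2 ^ b * prodReg rest

/-- The sum a_2 + a_4 + ⋯ of the even-indexed entries. -/
def evenSum : List ℤ → ℤ
  | [] => 0
  | [_] => 0
  | _ :: b :: rest => b + evenSum rest

/-- Möbius action of a 2×2 matrix on ℚ(q). -/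
def mobius (A : Matrix (Fin 2) (Fin 2) K) (x : K) : K :=
  (A 0 0 * x + A 0 1) / (A 1 0 * x + A 1 1)


lemma hq0 : (q : K) ≠ 0 := RatFunc.X_ne_zero

lemma hq1 : (1 : K) - q ≠ 0 := by
  rw [sub_ne_zero]
  intro h
  have h2 : algebraMap (Polynomial ℚ) K 1 = algebraMap (Polynomial ℚ) K Polynomial.X := by
    rw [RatFunc.algebraMap_X, map_one]; exact h
  have h3 := RatFunc.algebraMap_injective ℚ h2
  simpa using congrArg Polynomial.natDegree h3

lemma sigma1_zpow (c : ℤ) :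
    ((σ1 ^ (-c) : (Matrix (Fin 2) (Fin 2) K)ˣ) : Matrix (Fin 2) (Fin 2) K)
      = !![q ^ c, (1 - q ^ c) / (1 - q); 0, 1] := by
  induction c using Int.induction_on with
  | zero => ext i j; fin_cases i <;> fin_cases j <;> simp
  | succ n ih =>
      have : σ1 ^ (-(n + 1 : ℤ)) = σ1 ^ (-(n : ℤ)) * σ1⁻¹ := by
        rw [show (-(n + 1 : ℤ)) = -(n : ℤ) - 1 by ring, zpow_sub_one]
      rw [this, Units.val_mul, ih]
      have hinv : ((σ1⁻¹ : (Matrix (Fin 2) (Fin 2) K)ˣ) : Matrix (Fin 2) (Fin 2) K)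
          = !![q, 1; 0, 1] := rfl
      rw [hinv]
      ext i j
      fin_cases i <;> fin_cases j
      all_goals simp [Matrix.mul_apply, Fin.sum_univ_two, zpow_add₀ hq0]
      all_goals try field_simp [hq1]
      all_goals try ring
      all_goals try (rw [mul_inv_cancel₀ hq0]; ring)
  | pred n ih =>
      have : σ1 ^ (-(-(n : ℤ) - 1)) = σ1 ^ (-(-(n : ℤ))) * σ1 := by
        rw [show (-(-(n : ℤ) - 1)) = -(-(n : ℤ)) + 1 by ring, zpow_add_one]
      rw [this, Units.val_mul, ih]
      have hs : ((σ1 : (Matrix (Fin 2) (Fin 2) K)ˣ) : Matrix (Fin 2) (Fin 2) K)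
          = !![q⁻¹, -q⁻¹; 0, 1] := rfl
      rw [hs]
      ext i j
      fin_cases i <;> fin_cases j
      all_goals simp [Matrix.mul_apply, Fin.sum_univ_two, zpow_sub₀ hq0]
      all_goals try field_simp [hq1]
      all_goals try ring
      all_goals try (rw [mul_inv_cancel₀ hq0]; ring)

lemma sigma1Sq (c : ℤ) :
    ((σ1 ^ (-c) * Sq : (Matrix (Fin 2) (Fin 2) K)ˣ) : Matrix (Fin 2) (Fin 2) K)
      = !![(1 - q ^ c) / (1 - q), -q ^ (c - 1); 1, 0] := by
  rw [Units.val_mul, sigma1_zpow]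
  have hs : ((Sq : (Matrix (Fin 2) (Fin 2) K)ˣ) : Matrix (Fin 2) (Fin 2) K)
      = !![0, -q⁻¹; 1, 0] := rfl
  rw [hs]
  ext i j
  fin_cases i <;> fin_cases j
  all_goals simp [Matrix.mul_apply, Fin.sum_univ_two, zpow_sub₀ hq0]
  all_goals try field_simp [hq1]
  all_goals try ring
  all_goals try (rw [mul_inv_cancel₀ hq0]; ring)


lemma mulVec_step (c : ℤ) (a b : K) :
    (!![(1 - q ^ c) / (1 - q), -q ^ (c - 1); 1, 0]).mulVec ![a, b]
      = ![(1 - q ^ c) / (1 - q) * a - q ^ (c - 1) * b, a] := by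
  ext i
  fin_cases i
  all_goals simp [Matrix.mulVec, dotProduct, Fin.sum_univ_two]
  all_goals try ring

lemma qf_eq (c : ℤ) :
    (1 - q ^ c) / (1 - q) * 1 - q ^ (c - 1) * (1 - q) = qfX q c := by
  have e1 : q ^ c = q ^ (c - 1) * q := by rw [← zpow_add_one₀ hq0]; ring_nf
  have e2 : q ^ (c + 1) = q ^ (c - 1) * (q * q) := by
    rw [show c + 1 = (c - 1) + 2 by ring, zpow_add₀ hq0]; rw [zpow_two]
  rw [qfX, e1, e2]
  field_simp [hq1]
  ring

/-- the matrix product σ_{1,q}^{-c_1}·S_q⋯σ_{1,q}^{-c_k}·S_q applied to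
the column vector (1, 1-q)ᵀ gives the left q-deformed Euler continuants. -/
theorem prodCS_mulVec (c1 : ℤ) (cs : List ℤ) :
    (prodCS (c1 :: cs) : Matrix (Fin 2) (Fin 2) K).mulVec ![1, 1 - q]
      = ![Eflat (c1 :: cs), Eflat cs] := by
  induction cs generalizing c1 with
  | nil =>
      show ((σ1 ^ (-c1) * Sq * 1 : (Matrix (Fin 2) (Fin 2) K)ˣ) :
        Matrix (Fin 2) (Fin 2) K).mulVec ![1, 1 - q] = _
      rw [mul_one, sigma1Sq, mulVec_step]
      ext i
      fin_cases i
      · show (1 - q ^ c1) / (1 - q) * 1 - q ^ (c1 - 1) * (1 - q) = Eflat [c1]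
        rw [qf_eq]; rfl
      · rfl
  | cons c2 rest ih =>
      show ((σ1 ^ (-c1) * Sq * prodCS (c2 :: rest) : (Matrix (Fin 2) (Fin 2) K)ˣ) :
        Matrix (Fin 2) (Fin 2) K).mulVec ![1, 1 - q] = _
      rw [Units.val_mul, ← Matrix.mulVec_mulVec, ih c2, sigma1Sq, mulVec_step]
      ext i
      fin_cases i
      · show (1 - q ^ c1) / (1 - q) * Eflat (c2 :: rest) - q ^ (c1 - 1) * Eflat rest
          = Eflat (c1 :: c2 :: rest)
        rfl
      · rfl
end
end

section
/- Let c_1 ≥ 2 and c_2, …, c_k ≥ 2 be integers (so that the rational number [[c_1,…,c_k]] is greater than 1), and set m = c_1 + ⋯ + c_k − k + 1. Then the normalized Jones polynomial satisfies J(c_1,…,c_k)(q) = q^m · R^♭(q^{−1}), i.e. in ℚ(q) one has q·E^♯_k(c_1,…,c_k)_q + (1 − q)·E^♯_{k−1}(c_2,…,c_k)_q = q^m times the rational function obtained from E^♭_k(c_1,…,c_k)_q by substituting q^{−1} for q. -/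
noncomputable section

lemma qK_ne_zero : q ≠ 0 := RatFunc.X_ne_zero

lemma one_sub_q_ne_zero : (1:K) - q ≠ 0 := by
  rw [sub_ne_zero]
  intro h
  have := (RatFunc.algebraMap_injective ℚ) (a₁ := 1) (a₂ := Polynomial.X)
    (by simpa [RatFunc.algebraMap_X, q] using h)
  exact Polynomial.X_ne_C (1:ℚ) (by simpa using this.symm)

lemma zq_ne_zero (n : ℤ) : q ^ n ≠ 0 := zpow_ne_zero n qK_ne_zero

lemma one_sub_mul_qs (n : ℤ) : (1 - q) * qsX q n = 1 - q ^ n := by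
  rw [qsX, mul_div_cancel₀ _ one_sub_q_ne_zero]

lemma qpow_split (c : ℤ) : q ^ c = q ^ (c - 1) * q := by
  rw [← zpow_add_one₀ qK_ne_zero]; congr 1; ring

lemma inv_one_sub_qinv : ((1:K) - q⁻¹)⁻¹ = -q * (1 - q)⁻¹ := by
  have h1 := one_sub_q_ne_zero
  have h4 := qK_ne_zero
  apply inv_eq_of_mul_eq_one_right
  field_simp
  ring

lemma qs_inv (c : ℤ) : q ^ (c - 1) * qsX q⁻¹ c = qs c := by
  rw [qsX, qs, qsX, inv_zpow, qpow_split c, div_eq_mul_inv, div_eq_mul_inv,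
    inv_one_sub_qinv]
  generalize hgen : q ^ (c - 1) = t
  have ht : t ≠ 0 := hgen ▸ zq_ne_zero (c - 1)
  have h1 := one_sub_q_ne_zero
  have h4 := qK_ne_zero
  field_simp
  ring

lemma qf_inv (c : ℤ) : q ^ c * qfX q⁻¹ c = q * qs c + (1 - q) := by
  have e1 : (q⁻¹ : K) ^ (c - 1) = (q ^ (c-1))⁻¹ := inv_zpow q (c-1)
  have e2 : (q⁻¹ : K) ^ c = (q ^ (c-1))⁻¹ * q⁻¹ := by
    rw [inv_zpow, qpow_split c, mul_inv]
  have e3 : (q⁻¹ : K) ^ (c + 1) = (q ^ (c-1))⁻¹ * q⁻¹ * q⁻¹ := by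
    rw [inv_zpow, show c + 1 = (c-1) + 1 + 1 by ring, zpow_add_one₀ qK_ne_zero,
      zpow_add_one₀ qK_ne_zero, mul_inv, mul_inv]
  rw [qfX, qs, qsX, e1, e2, e3, qpow_split c, div_eq_mul_inv, div_eq_mul_inv,
    inv_one_sub_qinv]
  generalize hgen : q ^ (c - 1) = t
  have ht : t ≠ 0 := hgen ▸ zq_ne_zero (c - 1)
  have h1 := one_sub_q_ne_zero
  have h4 := qK_ne_zero
  field_simp
  ring

/-- `G(L) = q·E♯(L) + (1-q)·E♯(tail L)`, with `G([]) = q`. -/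
def Gf : List ℤ → K
  | [] => q
  | c :: rest => q * Esharp (c :: rest) + (1 - q) * Esharp rest

/-- `A(L) = q^{sum - len + 1}·E♭_{q⁻¹}(L)`, with `A([]) = q`. -/
def Af : List ℤ → K
  | [] => q
  | c :: rest => q ^ ((c :: rest).sum - ((c :: rest).length : ℤ) + 1)
      * EflatX q⁻¹ (c :: rest)

lemma qpow_exp_cons (c : ℤ) (L : List ℤ) :
    q ^ ((c :: L).sum - ((c :: L).length : ℤ) + 1)
      = q ^ (c - 1) * q ^ (L.sum - (L.length : ℤ) + 1) := by
  rw [← zpow_add₀ qK_ne_zero]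
  congr 1
  simp [List.sum_cons, List.length_cons]
  ring

lemma Arec (c d : ℤ) (rest : List ℤ) :
    Af (c :: d :: rest) = qs c * Af (d :: rest) - q ^ (d - 1) * Af rest := by
  have tail : q ^ ((d :: rest).sum - ((d :: rest).length : ℤ) + 1) * EflatX q⁻¹ rest
      = q ^ (d - 1) * Af rest := by
    cases rest with
    | nil =>
        rw [Af, show EflatX q⁻¹ [] = 1 from rfl, mul_one,
          show (([d]:List ℤ).sum - (([d]:List ℤ).length : ℤ) + 1) = d by simp,
          qpow_split d]
    | cons e r => rw [qpow_exp_cons d (e :: r), Af, mul_assoc]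
  rw [Af, Af, ← tail, qpow_exp_cons c (d :: rest)]
  simp only [EflatX]
  rw [inv_zpow, ← qs_inv c]
  have hne := zq_ne_zero (c - 1)
  field_simp

lemma Grec (c d : ℤ) (rest : List ℤ) :
    Gf (c :: d :: rest) = qs c * Gf (d :: rest) - q ^ (d - 1) * Gf rest := by
  have hc := qpow_split c
  have hd := qpow_split d
  have h1 := one_sub_mul_qs c
  have h2 := one_sub_mul_qs d
  cases rest with
  | nil =>
      simp only [Gf, Esharp, EsharpX, qs]
      linear_combination h2 - h1 + hc - hd
  | cons e r =>
      simp only [Gf, Esharp, EsharpX, qs]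
      linear_combination (EsharpX q (e :: r)) * (h2 - h1 + hc - hd)

lemma Gf_eq_Af : ∀ L : List ℤ, Gf L = Af L
  | [] => rfl
  | [c] => by
      show q * Esharp [c] + (1 - q) * Esharp [] = Af [c]
      rw [Af, show (([c]:List ℤ).sum - (([c]:List ℤ).length : ℤ) + 1) = c by simp,
        show EflatX q⁻¹ [c] = qfX q⁻¹ c from rfl, qf_inv c]
      simp only [Esharp, EsharpX, qs]
      ring
  | c :: d :: rest => by
      rw [Grec, Arec, Gf_eq_Af (d :: rest), Gf_eq_Af rest]

/-- the normalized Jones polynomial satisfies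
J(c_1,…,c_k)(q) = q^m · R^♭(q^{-1}) with m = c_1 + ⋯ + c_k − k + 1, where
R^♭ = E^♭_k(c_1,…,c_k) and substituting q^{-1} for q is evaluation of the defining
expression at q⁻¹. -/
theorem Jones_eq_qpow_mul_Eflat_inv (c1 : ℤ) (cs : List ℤ)
    (hc1 : 2 ≤ c1) (hcs : ∀ x ∈ cs, 2 ≤ x) :
    q * Esharp (c1 :: cs) + (1 - q) * Esharp cs
      = q ^ ((c1 :: cs).sum - ((c1 :: cs).length : ℤ) + 1)
        * EflatX q⁻¹ (c1 :: cs) := by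
  have := Gf_eq_Af (c1 :: cs)
  simpa [Gf, Af] using this
end
end
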